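/- Let D̄ = {z ∈ ℂ : ‖z‖ ≤ 1} and Circle = {z ∈ ℂ : ‖z‖ = 1}, let c ∈ ℝ with c ≠ 0, and let φ : D̄ × Circle → ℂ be continuous and odd in the fiber variable: φ(p, −w) = −φ(p, w) for all p ∈ D̄, w ∈ Circle. Suppose that for every t ∈ [0,1] the value φ(exp(2πit), −exp(2πit)) lies on the affine line {w ∈ ℂ : Re(w) + Im(w) = c}. Then there exist p ∈ D̄ and w ∈ Circle with φ(p, w) = 0. -/

import Mathlib

open Real Complex

/-- Negation on the unit circle. -/
noncomputable instance : Neg Circle :=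
  ⟨fun z => ⟨-(z : ℂ), by simp [Submonoid.unitSphere, mem_sphere_zero_iff_norm, Circle.norm_coe]⟩⟩


private lemma exp_diff_eq_one {x : ℝ} (h : Complex.exp ((x : ℂ) * Complex.I) = 1) :
    ∃ n : ℤ, x = 2 * π * n := by
  obtain ⟨n, hn⟩ := Complex.exp_eq_one_iff.mp h
  refine ⟨n, ?_⟩
  have := congrArg Complex.im hn
  simpa [mul_comm, mul_assoc] using this

private lemma lemA {a b : ℝ} (hab : a ≤ b) {D : ℝ → ℝ}
    (hD : ContinuousOn D (Set.Icc a b)) {w : ℂ}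
    (hw : ∀ t ∈ Set.Icc a b, Complex.exp ((D t : ℂ) * Complex.I) = w) :
    D b = D a := by
  have hw0 : w ≠ 0 := by
    rw [← hw a ⟨le_refl a, hab⟩]; exact Complex.exp_ne_zero _
  have h1 : Complex.exp (((D b - D a : ℝ) : ℂ) * Complex.I) = 1 := by
    push_cast
    rw [sub_mul, Complex.exp_sub, hw b ⟨hab, le_refl b⟩, hw a ⟨le_refl a, hab⟩, div_self hw0]
  obtain ⟨n, hn⟩ := exp_diff_eq_one h1
  by_contra hne
  have hpi := Real.pi_pos
  have key : ∀ r : ℝ, Complex.exp ((r : ℂ) * Complex.I) = w →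
      ∀ t ∈ Set.Icc a b, D t = r + π → False := by
    intro r hr t ht hDt
    have h2 : Complex.exp ((D t : ℂ) * Complex.I) = -w := by
      rw [hDt]; push_cast
      rw [add_mul, Complex.exp_add, Complex.exp_pi_mul_I, hr]; ring
    rw [hw t ht] at h2
    exact hw0 (by linear_combination h2 / 2)
  rcases lt_or_gt_of_ne hne with hlt | hgt
  · -- D b < D a, so n ≤ -1 and D a ≥ D b + 2π
    have hn0 : (n : ℤ) < 0 := by
      have : (n : ℝ) < 0 := by nlinarith
      exact_mod_cast this
    have hn1 : (n : ℝ) ≤ -1 := by exact_mod_cast Int.le_sub_one_of_lt hn0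
    obtain ⟨t, ht, hDt⟩ := intermediate_value_Icc' hab hD
      (Set.mem_Icc.mpr ⟨by nlinarith, by nlinarith⟩ : D b + π ∈ Set.Icc (D b) (D a))
    exact key (D b) (hw b ⟨hab, le_refl b⟩) t ht hDt
  · have hn0 : (0 : ℤ) < n := by
      have : (0 : ℝ) < n := by nlinarith
      exact_mod_cast this
    have hn1 : (1 : ℝ) ≤ n := by exact_mod_cast hn0
    obtain ⟨t, ht, hDt⟩ := intermediate_value_Icc hab hD
      (Set.mem_Icc.mpr ⟨by nlinarith, by nlinarith⟩ : D a + π ∈ Set.Icc (D a) (D b))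
    exact key (D a) (hw a ⟨le_refl a, hab⟩) t ht hDt


private lemma exp_diff_eq_oneB {x : ℝ} (h : Complex.exp ((x : ℂ) * Complex.I) = 1) :
    ∃ n : ℤ, x = 2 * π * n := by
  obtain ⟨n, hn⟩ := Complex.exp_eq_one_iff.mp h
  refine ⟨n, ?_⟩
  have := congrArg Complex.im hn
  simpa [mul_comm, mul_assoc] using this

private lemma lemB {a b : ℝ} (hab : a ≤ b) {D : ℝ → ℝ}
    (hD : ContinuousOn D (Set.Icc a b))
    (hsin : ∀ t ∈ Set.Icc a b, Real.sin (D t + π / 4) ≠ 0)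
    (h1 : Complex.exp (((D b - D a : ℝ) : ℂ) * Complex.I) = 1) :
    D b = D a := by
  obtain ⟨n, hn⟩ := exp_diff_eq_oneB h1
  by_contra hne
  have hpi := Real.pi_pos
  have key : ∀ r : ℝ, ∀ t ∈ Set.Icc a b,
      D t = (⌊(r + π / 4) / π⌋ + 1) * π - π / 4 → False := by
    intro r t ht hDt
    apply hsin t ht
    rw [hDt, sub_add_cancel]
    exact_mod_cast Real.sin_int_mul_pi (⌊(r + π / 4) / π⌋ + 1)
  rcases lt_or_gt_of_ne hne with hlt | hgt
  · -- D b < D a, n ≤ -1, D a ≥ D b + 2π; value from base D b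
    have hn1 : (n : ℝ) ≤ -1 := by
      have : (n : ℤ) < 0 := by exact_mod_cast (by nlinarith : (n : ℝ) < 0)
      exact_mod_cast Int.le_sub_one_of_lt this
    set m : ℤ := ⌊(D b + π / 4) / π⌋ + 1 with hm
    have hfl : (⌊(D b + π / 4) / π⌋ : ℝ) ≤ (D b + π / 4) / π := Int.floor_le _
    have hfu : (D b + π / 4) / π < ⌊(D b + π / 4) / π⌋ + 1 := Int.lt_floor_add_one _
    have hml : D b + π / 4 < m * π := by
      rw [hm]; push_cast
      calc D b + π / 4 = ((D b + π / 4) / π) * π := (div_mul_cancel₀ _ (ne_of_gt hpi)).symm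
        _ < (↑⌊(D b + π / 4) / π⌋ + 1) * π := by
            apply mul_lt_mul_of_pos_right hfu hpi
    have hmu : (m : ℝ) * π ≤ D b + π / 4 + π := by
      rw [hm]; push_cast
      have : (⌊(D b + π / 4) / π⌋ : ℝ) * π ≤ D b + π / 4 := by
        calc (⌊(D b + π / 4) / π⌋ : ℝ) * π ≤ ((D b + π / 4) / π) * π :=
              mul_le_mul_of_nonneg_right hfl (le_of_lt hpi)
          _ = D b + π / 4 := div_mul_cancel₀ _ (ne_of_gt hpi)
      linarith
    obtain ⟨t, ht, hDt⟩ := intermediate_value_Icc' hab hD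
      (Set.mem_Icc.mpr ⟨by nlinarith, by nlinarith⟩ :
        (m : ℝ) * π - π / 4 ∈ Set.Icc (D b) (D a))
    exact key (D b) t ht (by rw [hDt, hm]; push_cast; ring)
  · have hn1 : (1 : ℝ) ≤ n := by
      have : (0 : ℤ) < n := by exact_mod_cast (by nlinarith : (0 : ℝ) < n)
      exact_mod_cast this
    set m : ℤ := ⌊(D a + π / 4) / π⌋ + 1 with hm
    have hfl : (⌊(D a + π / 4) / π⌋ : ℝ) ≤ (D a + π / 4) / π := Int.floor_le _
    have hfu : (D a + π / 4) / π < ⌊(D a + π / 4) / π⌋ + 1 := Int.lt_floor_add_one _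
    have hml : D a + π / 4 < m * π := by
      rw [hm]; push_cast
      calc D a + π / 4 = ((D a + π / 4) / π) * π := (div_mul_cancel₀ _ (ne_of_gt hpi)).symm
        _ < (↑⌊(D a + π / 4) / π⌋ + 1) * π := by
            apply mul_lt_mul_of_pos_right hfu hpi
    have hmu : (m : ℝ) * π ≤ D a + π / 4 + π := by
      rw [hm]; push_cast
      have : (⌊(D a + π / 4) / π⌋ : ℝ) * π ≤ D a + π / 4 := by
        calc (⌊(D a + π / 4) / π⌋ : ℝ) * π ≤ ((D a + π / 4) / π) * π :=
              mul_le_mul_of_nonneg_right hfl (le_of_lt hpi)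
          _ = D a + π / 4 := div_mul_cancel₀ _ (ne_of_gt hpi)
      linarith
    obtain ⟨t, ht, hDt⟩ := intermediate_value_Icc hab hD
      (Set.mem_Icc.mpr ⟨by nlinarith, by nlinarith⟩ :
        (m : ℝ) * π - π / 4 ∈ Set.Icc (D a) (D b))
    exact key (D a) t ht (by rw [hDt, hm]; push_cast; ring)


private lemma prod_telescope {f : ℕ → ℂ} (hf : ∀ k, f k ≠ 0) (n : ℕ) :
    ∏ k ∈ Finset.range n, f (k + 1) / f k = f n / f 0 := by
  induction n with
  | zero => exact (div_self (hf 0)).symm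
  | succ n ih =>
    rw [Finset.prod_range_succ, ih, div_mul_div_comm, mul_comm (f n) (f (n + 1)),
      mul_div_mul_right _ _ (hf n)]

private lemma unit_exp_arg {z : ℂ} (hz : ‖z‖ = 1) :
    Complex.exp ((Complex.arg z : ℂ) * Complex.I) = z := by
  have := Complex.norm_mul_exp_arg_mul_I z
  rwa [hz, Complex.ofReal_one, one_mul] at this

private lemma exists_lift (F : ℝ × ℝ → ℂ) (hF : Continuous F) (h0 : ∀ x, F x ≠ 0) :
    ∃ θ : ℝ × ℝ → ℝ,
      ContinuousOn θ (Set.Icc (0 : ℝ × ℝ) (1, 1)) ∧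
      ∀ x ∈ Set.Icc (0 : ℝ × ℝ) (1, 1),
        F x = (‖F x‖ : ℂ) * Complex.exp ((θ x : ℂ) * Complex.I) := by
  set K : Set (ℝ × ℝ) := Set.Icc (0 : ℝ × ℝ) (1, 1) with hK
  set u : ℝ × ℝ → ℂ := fun x => F x / (‖F x‖ : ℂ) with hu_def
  have hFnorm : ∀ x, ((‖F x‖ : ℝ) : ℂ) ≠ 0 := by
    intro x; simpa using (norm_ne_zero_iff.mpr (h0 x))
  have hu : Continuous u := hF.div (Complex.continuous_ofReal.comp hF.norm) hFnorm
  have hu1 : ∀ x, ‖u x‖ = 1 := by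
    intro x
    have h1 : ‖F x‖ ≠ 0 := norm_ne_zero_iff.mpr (h0 x)
    simp only [hu_def, norm_div, Complex.norm_real, norm_norm]
    exact div_self h1
  have hu0 : ∀ x, u x ≠ 0 := by
    intro x h
    have := hu1 x
    rw [h] at this
    simpa using this
  have hKc : IsCompact K := isCompact_Icc
  have huc : UniformContinuousOn u K := hKc.uniformContinuousOn_of_continuous hu.continuousOn
  obtain ⟨δ, hδ, hδ'⟩ := (Metric.uniformContinuousOn_iff.mp huc) 1 one_pos
  obtain ⟨n, hn1, hnδ⟩ : ∃ n : ℕ, 0 < n ∧ 1 / (n : ℝ) < δ := by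
    obtain ⟨n, hn⟩ := exists_nat_one_div_lt hδ
    exact ⟨n + 1, Nat.succ_pos n, by exact_mod_cast hn⟩
  have hn0 : (n : ℝ) ≠ 0 := Nat.cast_ne_zero.mpr hn1.ne'
  set a : ℕ → ℝ × ℝ → ℝ × ℝ := fun k x => ((k : ℝ) / n) • x with ha_def
  have hmem : ∀ k : ℕ, k ≤ n → ∀ x ∈ K, a k x ∈ K := by
    intro k hk x hx
    have hc0 : (0 : ℝ) ≤ (k : ℝ) / n := by positivity
    have hc1 : (k : ℝ) / n ≤ 1 := by
      rw [div_le_one (by exact_mod_cast hn1)]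
      exact_mod_cast hk
    simp only [hK, Set.mem_Icc, Prod.le_def] at hx ⊢
    obtain ⟨⟨h1, h2⟩, h3, h4⟩ := hx
    simp only [ha_def, Prod.smul_fst, Prod.smul_snd, smul_eq_mul, Prod.fst_zero, Prod.snd_zero]
    refine ⟨⟨mul_nonneg hc0 h1, mul_nonneg hc0 h2⟩, ?_, ?_⟩
    · calc (k : ℝ) / n * x.1 ≤ 1 * 1 := by
            apply mul_le_mul hc1 h3 h1 zero_le_one
      _ = 1 := one_mul 1
    · calc (k : ℝ) / n * x.2 ≤ 1 * 1 := by
            apply mul_le_mul hc1 h4 h2 zero_le_one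
      _ = 1 := one_mul 1
  have hnormK : ∀ x ∈ K, ‖x‖ ≤ 1 := by
    intro x hx
    simp only [hK, Set.mem_Icc, Prod.le_def, Prod.fst_zero, Prod.snd_zero] at hx
    obtain ⟨⟨h1, h2⟩, h3, h4⟩ := hx
    rw [Prod.norm_def]
    apply max_le
    · rw [Real.norm_eq_abs, abs_le]; exact ⟨by linarith, h3⟩
    · rw [Real.norm_eq_abs, abs_le]; exact ⟨by linarith, h4⟩
  have hratio : ∀ k : ℕ, k < n → ∀ x ∈ K,
      u (a (k + 1) x) / u (a k x) ∈ Complex.slitPlane := by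
    intro k hk x hx
    have hma : a (k + 1) x ∈ K := hmem (k + 1) hk x hx
    have hmb : a k x ∈ K := hmem k (le_of_lt hk) x hx
    have hdist : dist (a (k + 1) x) (a k x) < δ := by
      rw [dist_eq_norm, ha_def]
      simp only
      rw [← sub_smul]
      have heq : ((k + 1 : ℕ) : ℝ) / n - (k : ℝ) / n = 1 / n := by
        push_cast; ring
      rw [heq, norm_smul, Real.norm_eq_abs, abs_of_pos (by positivity)]
      calc (1 / (n : ℝ)) * ‖x‖ ≤ (1 / n) * 1 :=
            mul_le_mul_of_nonneg_left (hnormK x hx) (by positivity)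
        _ = 1 / n := mul_one _
        _ < δ := hnδ
    have hclose := hδ' _ hma _ hmb hdist
    set za := u (a (k + 1) x)
    set zb := u (a k x)
    have hzb : zb ≠ 0 := hu0 _
    have habs : ‖za / zb - 1‖ < 1 := by
      have heq : za / zb - 1 = (za - zb) / zb := by field_simp
      rw [heq, norm_div, hu1]
      simpa [Complex.dist_eq] using hclose
    apply Complex.mem_slitPlane_iff.mpr
    left
    have hre : |(za / zb - 1).re| ≤ ‖za / zb - 1‖ := Complex.abs_re_le_norm _
    have heq2 : (za / zb - 1).re = (za / zb).re - 1 := by simp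
    rw [heq2] at hre
    have := abs_lt.mp (lt_of_le_of_lt hre habs)
    linarith [this.1]
  refine ⟨fun x => Complex.arg (u 0) +
      ∑ k ∈ Finset.range n, Complex.arg (u (a (k + 1) x) / u (a k x)), ?_, ?_⟩
  · apply ContinuousOn.add continuousOn_const
    apply continuousOn_finset_sum
    intro k hk
    rw [Finset.mem_range] at hk
    intro x hx
    have hg : ContinuousWithinAt (fun x => u (a (k + 1) x) / u (a k x)) K x := by
      apply ContinuousWithinAt.div
      · exact ((hu.comp (continuous_const_smul _)).continuousAt).continuousWithinAt
      · exact ((hu.comp (continuous_const_smul _)).continuousAt).continuousWithinAt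
      · exact hu0 _
    show ContinuousWithinAt (Complex.arg ∘ fun x => u (a (k + 1) x) / u (a k x)) K x
    exact ContinuousAt.comp_continuousWithinAt
      (f := fun y : ℝ × ℝ => u (a (k + 1) y) / u (a k y)) (g := Complex.arg)
      (Complex.continuousAt_arg (hratio k hk x hx)) hg
  · intro x hx
    have hexp : Complex.exp ((↑(Complex.arg (u 0) +
        ∑ k ∈ Finset.range n, Complex.arg (u (a (k + 1) x) / u (a k x))) : ℂ) * Complex.I)
        = u x := by
      push_cast
      rw [add_mul, Complex.exp_add, Finset.sum_mul, Complex.exp_sum]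
      rw [unit_exp_arg (hu1 0)]
      have hterm : ∀ k ∈ Finset.range n,
          Complex.exp ((Complex.arg (u (a (k + 1) x) / u (a k x)) : ℂ) * Complex.I)
          = u (a (k + 1) x) / u (a k x) := by
        intro k _
        apply unit_exp_arg
        rw [norm_div, hu1, hu1, div_one]
      rw [Finset.prod_congr rfl hterm]
      rw [prod_telescope (fun k => hu0 (a k x)) n]
      have h1 : a n x = x := by
        simp only [ha_def]
        rw [div_self hn0, one_smul]
      have h2 : a 0 x = 0 := by
        simp [ha_def]
      rw [h1, h2]
      rw [mul_div_cancel₀ _ (hu0 0)]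
    rw [hexp, hu_def]
    simp only
    rw [mul_comm, div_mul_cancel₀ _ (hFnorm x)]

/-- Let `φ : D̄ × Circle → ℂ` be continuous and odd in the fiber variable, and let `c ≠ 0`.
If for every `t ∈ [0,1]` the value `φ (exp (2πit), -exp (2πit))` lies on the line
`{w : ℂ | Re w + Im w = c}`, then `φ` vanishes somewhere. -/
theorem exists_zero_of_boundary_values_on_line
    (c : ℝ) (hc : c ≠ 0)
    (φ : (Metric.closedBall (0 : ℂ) 1) × Circle → ℂ) (hφ : Continuous φ)
    (hodd : ∀ (p : Metric.closedBall (0 : ℂ) 1) (w : Circle), φ (p, -w) = -φ (p, w))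
    (hline : ∀ t ∈ Set.Icc (0 : ℝ) 1,
      ∀ v : (Metric.closedBall (0 : ℂ) 1) × Circle,
      (v.1 : ℂ) = Complex.exp (2 * π * t * Complex.I) →
      (v.2 : ℂ) = -Complex.exp (2 * π * t * Complex.I) →
      φ v ∈ {w : ℂ | w.re + w.im = c}) :
    ∃ (p : Metric.closedBall (0 : ℂ) 1) (w : Circle), φ (p, w) = 0 := by
  by_contra hcon
  push_neg at hcon
  -- the boundary circle loop
  set e : ℝ → ℂ := fun t => Complex.exp (2 * π * t * Complex.I) with he_def
  have he_cont : Continuous e := by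
    apply Complex.continuous_exp.comp
    exact (continuous_const.mul (Complex.continuous_ofReal)).mul continuous_const
  have he_norm : ∀ t, ‖e t‖ = 1 := by
    intro t
    rw [he_def]
    simp only [Complex.norm_exp]
    norm_num [Complex.mul_re, Complex.mul_im]
  have he_add_half : ∀ t : ℝ, e (t + 1 / 2) = -e t := by
    intro t
    rw [he_def]
    simp only
    have : (2 * (π : ℂ) * ((t : ℝ) + 1 / 2 : ℝ) * Complex.I)
        = 2 * (π : ℂ) * (t : ℝ) * Complex.I + (π : ℂ) * Complex.I := by
      push_cast; ring
    rw [this, Complex.exp_add, Complex.exp_pi_mul_I]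
    ring
  have he_per : e 1 = e 0 := by
    rw [he_def]
    simp only
    norm_num
  -- clamping
  set σ : ℝ → ℝ := fun s => min 1 (max 0 s) with hσ_def
  have hσ_cont : Continuous σ := continuous_const.min (continuous_const.max continuous_id)
  have hσ0 : ∀ s, 0 ≤ σ s := fun s => le_min zero_le_one (le_max_left 0 s)
  have hσ1 : ∀ s, σ s ≤ 1 := fun s => min_le_left _ _
  have hσ_zero : σ 0 = 0 := by norm_num [hσ_def]
  have hσ_one : σ 1 = 1 := by norm_num [hσ_def]
  -- base point map
  set P : ℝ × ℝ → ℂ := fun x => ((1 - σ x.1 : ℝ) : ℂ) * e x.2 with hP_def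
  have hPmem : ∀ x, P x ∈ Metric.closedBall (0 : ℂ) 1 := by
    intro x
    rw [Metric.mem_closedBall, dist_zero_right, hP_def]
    simp only [norm_mul, Complex.norm_real, he_norm, mul_one, Real.norm_eq_abs]
    rw [_root_.abs_of_nonneg (by linarith [hσ1 x.1] : (0:ℝ) ≤ 1 - σ x.1)]
    linarith [hσ0 x.1]
  set Pb : ℝ × ℝ → (Metric.closedBall (0 : ℂ) 1) := fun x => ⟨P x, hPmem x⟩ with hPb_def
  have hPb_cont : Continuous Pb := by
    apply Continuous.subtype_mk
    exact (Complex.continuous_ofReal.comp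
      (continuous_const.sub (hσ_cont.comp continuous_fst))).mul (he_cont.comp continuous_snd)
  -- fiber map
  have hWmem : ∀ t : ℝ, -e t ∈ Submonoid.unitSphere ℂ := by
    intro t
    simp [Submonoid.unitSphere, mem_sphere_zero_iff_norm, he_norm t]
  set W : ℝ → Circle := fun t => ⟨-e t, hWmem t⟩ with hW_def
  have hW_cont : Continuous W := Continuous.subtype_mk he_cont.neg _
  -- the global map
  set F : ℝ × ℝ → ℂ := fun x => φ (Pb x, W x.2) with hF_def
  have hF : Continuous F := hφ.comp (hPb_cont.prodMk (hW_cont.comp continuous_snd))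
  have hF0 : ∀ x, F x ≠ 0 := fun x => hcon _ _
  obtain ⟨θ, hθc, hθ⟩ := exists_lift F hF hF0
  set K : Set (ℝ × ℝ) := Set.Icc (0 : ℝ × ℝ) (1, 1) with hK_def
  have hmemK : ∀ s t : ℝ, s ∈ Set.Icc (0 : ℝ) 1 → t ∈ Set.Icc (0 : ℝ) 1 →
      ((s, t) : ℝ × ℝ) ∈ K := by
    intro s t hs ht
    simp only [hK_def, Set.mem_Icc, Prod.le_def, Prod.fst_zero, Prod.snd_zero]
    exact ⟨⟨hs.1, ht.1⟩, hs.2, ht.2⟩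
  -- periodicity in t
  have hper : ∀ s : ℝ, F (s, 1) = F (s, 0) := by
    intro s
    have h1 : Pb (s, 1) = Pb (s, 0) := by
      apply Subtype.ext
      show P (s, 1) = P (s, 0)
      rw [hP_def]
      simp only [he_per]
    have h2 : W 1 = W 0 := by
      apply Subtype.ext
      show -e 1 = -e 0
      rw [he_per]
    rw [hF_def]
    simp only
    rw [h1, h2]
  -- oddness at s = 1
  have hPb1 : ∀ t : ℝ, Pb (1, t) = Pb (1, 0) := by
    intro t
    apply Subtype.ext
    show P (1, t) = P (1, 0)
    rw [hP_def]
    simp only [hσ_one]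
    norm_num
  have hodd1 : ∀ t : ℝ, F (1, t + 1 / 2) = -F (1, t) := by
    intro t
    have hW2 : W (t + 1 / 2) = -(W t) := by
      apply Subtype.ext
      show -e (t + 1 / 2) = -(-e t)
      rw [he_add_half]
    rw [hF_def]
    simp only
    rw [hPb1 (t + 1 / 2), hW2, hodd, hPb1 t]
  -- boundary values on the line
  have hline' : ∀ t ∈ Set.Icc (0 : ℝ) 1, (F (0, t)).re + (F (0, t)).im = c := by
    intro t ht
    apply hline t ht (Pb (0, t), W t)
    · show P (0, t) = Complex.exp (2 * π * t * Complex.I)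
      rw [hP_def]
      simp only [hσ_zero]
      norm_num
      rfl
    · show -e t = -Complex.exp (2 * π * t * Complex.I)
      rfl
  -- norms are positive
  have hrne : ∀ x : ℝ × ℝ, ((‖F x‖ : ℝ) : ℂ) ≠ 0 := by
    intro x
    simpa using norm_ne_zero_iff.mpr (hF0 x)
  -- exp values equal when F values equal
  have hcancel : ∀ x y : ℝ × ℝ, x ∈ K → y ∈ K → F x = F y →
      Complex.exp ((θ x : ℂ) * Complex.I) = Complex.exp ((θ y : ℂ) * Complex.I) := by
    intro x y hx hy hFeq
    have h1 := hθ x hx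
    have h2 := hθ y hy
    rw [hFeq] at h1
    exact mul_left_cancel₀ (hrne y) (h1.symm.trans h2)
  -- Step 1 : θ (0,1) = θ (0,0)
  have hmem01 : ∀ t ∈ Set.Icc (0 : ℝ) 1, ((0 : ℝ), t) ∈ K := fun t ht =>
    hmemK 0 t (Set.left_mem_Icc.mpr zero_le_one) ht
  have hD1cont : ContinuousOn (fun t : ℝ => θ (0, t)) (Set.Icc 0 1) := by
    apply ContinuousOn.comp hθc (Continuous.continuousOn (by fun_prop))
    intro t ht
    exact hmem01 t ht
  have hD1sin : ∀ t ∈ Set.Icc (0 : ℝ) 1, Real.sin (θ (0, t) + π / 4) ≠ 0 := by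
    intro t ht hzero
    have hre : (F (0, t)).re = ‖F (0, t)‖ * Real.cos (θ (0, t)) := by
      rw [hθ _ (hmem01 t ht)]
      simp [Complex.mul_re, Complex.exp_ofReal_mul_I_re, Complex.exp_ofReal_mul_I_im]
    have him : (F (0, t)).im = ‖F (0, t)‖ * Real.sin (θ (0, t)) := by
      rw [hθ _ (hmem01 t ht)]
      simp [Complex.mul_im, Complex.exp_ofReal_mul_I_re, Complex.exp_ofReal_mul_I_im]
    have hcs : Real.cos (θ (0, t)) + Real.sin (θ (0, t)) = 0 := by
      have := hzero
      rw [Real.sin_add, Real.cos_pi_div_four, Real.sin_pi_div_four] at this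
      have h2 : Real.sqrt 2 / 2 ≠ 0 := by positivity
      have : (Real.sin (θ (0, t)) + Real.cos (θ (0, t))) * (Real.sqrt 2 / 2) = 0 := by
        linarith [this]
      rcases mul_eq_zero.mp this with h | h
      · linarith
      · exact absurd h h2
    have hcval := hline' t ht
    rw [hre, him] at hcval
    apply hc
    rw [← hcval]
    linear_combination ‖F (0, t)‖ * hcs
  have hexp1 : Complex.exp (((θ (0, 1) - θ (0, 0) : ℝ) : ℂ) * Complex.I) = 1 := by
    push_cast
    rw [sub_mul, Complex.exp_sub]
    rw [hcancel (0, 1) (0, 0) (hmem01 1 (by norm_num)) (hmem01 0 (by norm_num)) (hper 0)]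
    exact div_self (Complex.exp_ne_zero _)
  have hstep1 : θ (0, 1) = θ (0, 0) :=
    lemB zero_le_one hD1cont hD1sin hexp1
  -- Step 2 : θ (1,1) - θ (1,0) = θ (0,1) - θ (0,0) = 0
  have hGcont : ContinuousOn (fun s : ℝ => θ (s, 1) - θ (s, 0)) (Set.Icc 0 1) := by
    apply ContinuousOn.sub
    · apply ContinuousOn.comp hθc (Continuous.continuousOn (by fun_prop))
      intro s hs
      exact hmemK s 1 hs (Set.right_mem_Icc.mpr zero_le_one)
    · apply ContinuousOn.comp hθc (Continuous.continuousOn (by fun_prop))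
      intro s hs
      exact hmemK s 0 hs (Set.left_mem_Icc.mpr zero_le_one)
  have hGw : ∀ s ∈ Set.Icc (0 : ℝ) 1,
      Complex.exp (((θ (s, 1) - θ (s, 0) : ℝ) : ℂ) * Complex.I) = 1 := by
    intro s hs
    push_cast
    rw [sub_mul, Complex.exp_sub]
    rw [hcancel (s, 1) (s, 0) (hmemK s 1 hs (by norm_num [Set.mem_Icc]))
      (hmemK s 0 hs (by norm_num [Set.mem_Icc])) (hper s)]
    exact div_self (Complex.exp_ne_zero _)
  have hstep2 : θ (1, 1) - θ (1, 0) = θ (0, 1) - θ (0, 0) :=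
    lemA zero_le_one hGcont hGw
  have hG0 : θ (1, 1) - θ (1, 0) = 0 := by rw [hstep2, hstep1]; ring
  -- Step 3 : the odd loop
  have hmem1t : ∀ t ∈ Set.Icc (0 : ℝ) 1, ((1 : ℝ), t) ∈ K := fun t ht =>
    hmemK 1 t (Set.right_mem_Icc.mpr zero_le_one) ht
  have hdw : ∀ t ∈ Set.Icc (0 : ℝ) (1 / 2),
      Complex.exp (((θ (1, t + 1 / 2) - θ (1, t) : ℝ) : ℂ) * Complex.I) = -1 := by
    intro t ht
    have ht1 : t ∈ Set.Icc (0 : ℝ) 1 := ⟨ht.1, by linarith [ht.2]⟩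
    have ht2 : t + 1 / 2 ∈ Set.Icc (0 : ℝ) 1 := ⟨by linarith [ht.1], by linarith [ht.2]⟩
    have h1 := hθ _ (hmem1t _ ht2)
    have h2 := hθ _ (hmem1t _ ht1)
    rw [hodd1 t] at h1
    have hnorm_eq : (‖-F (1, t)‖ : ℂ) = (‖F (1, t)‖ : ℂ) := by rw [norm_neg]
    rw [hnorm_eq] at h1
    -- h1 : -F (1,t) = ↑‖F (1,t)‖ * exp (θ(1,t+1/2) I)
    -- h2 : F (1,t) = ↑‖F (1,t)‖ * exp (θ(1,t) I)
    have h3 : ((‖F (1, t)‖ : ℝ) : ℂ) * Complex.exp ((θ (1, t + 1 / 2) : ℂ) * Complex.I)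
        = ((‖F (1, t)‖ : ℝ) : ℂ) * (-Complex.exp ((θ (1, t) : ℂ) * Complex.I)) := by
      linear_combination -h1 - h2
    have h4 := mul_left_cancel₀ (hrne (1, t)) h3
    push_cast
    rw [sub_mul, Complex.exp_sub, h4]
    rw [neg_div, div_self (Complex.exp_ne_zero _)]
  have hdcont : ContinuousOn (fun t : ℝ => θ (1, t + 1 / 2) - θ (1, t)) (Set.Icc 0 (1 / 2)) := by
    apply ContinuousOn.sub
    · apply ContinuousOn.comp hθc (Continuous.continuousOn (by fun_prop))
      intro t ht
      exact hmem1t _ ⟨by linarith [ht.1], by linarith [ht.2]⟩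
    · apply ContinuousOn.comp hθc (Continuous.continuousOn (by fun_prop))
      intro t ht
      exact hmem1t _ ⟨ht.1, by linarith [ht.2]⟩
  have hdconst : θ (1, (1 : ℝ) / 2 + 1 / 2) - θ (1, 1 / 2)
      = θ (1, (0 : ℝ) + 1 / 2) - θ (1, 0) :=
    lemA (by norm_num) hdcont hdw
  have hhalf : ((1 : ℝ) / 2 + 1 / 2) = 1 := by norm_num
  have hzero2 : ((0 : ℝ) + 1 / 2) = 1 / 2 := by norm_num
  rw [hhalf, hzero2] at hdconst
  -- combine
  have hd0 : θ (1, (1 : ℝ) / 2) - θ (1, 0) = 0 := by linarith [hG0, hdconst]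
  have := hdw 0 (by norm_num [Set.mem_Icc])
  rw [hzero2, hd0] at this
  norm_num at this
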